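/- With the recursion p₀=1, q₀=0, p_{m+1}=p_m'+xq_m, q_{m+1}=p_m+q_m', the degree of p_m + q_m equals ⌊m/2⌋ for all m ≥ 1, and for |x| < 1 one has |p_m(x)| + |q_m(x)| ≤ (d_{m+1}!)²/(1-|x|), where d_m = ⌊m/2⌋. -/
import Mathlib

open Polynomial

def ab : ℕ → ℕ × ℕ
  | 0 => (1, 0)
  | m + 1 => ((m / 2) * (ab m).1 + (ab m).2, (ab m).1 + (m / 2) * (ab m).2)

lemma ab_sum (m : ℕ) :
    (ab (m+1)).1 + (ab (m+1)).2 = (m/2 + 1) * ((ab m).1 + (ab m).2) := by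
  show (m / 2) * (ab m).1 + (ab m).2 + ((ab m).1 + (m / 2) * (ab m).2) = _
  ring

lemma ab_le_aux : ∀ k : ℕ,
    (ab (2*k)).1 + (ab (2*k)).2 ≤ (k.factorial)^2 ∧
    (ab (2*k+1)).1 + (ab (2*k+1)).2 ≤ (k+1) * (k.factorial)^2 := by
  intro k
  induction k with
  | zero => simp [ab]
  | succ n ih =>
    have h1 : (ab (2*(n+1))).1 + (ab (2*(n+1))).2 ≤ ((n+1).factorial)^2 := by
      have h2 : 2*(n+1) = (2*n+1)+1 := by ring
      rw [h2, ab_sum]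
      have h3 : (2*n+1)/2 + 1 = n+1 := by omega
      rw [h3]
      calc (n+1) * ((ab (2*n+1)).1 + (ab (2*n+1)).2)
          ≤ (n+1) * ((n+1) * n.factorial^2) := Nat.mul_le_mul_left _ ih.2
        _ = ((n+1).factorial)^2 := by rw [Nat.factorial_succ]; ring
    refine ⟨h1, ?_⟩
    rw [ab_sum]
    have h3 : (2*(n+1))/2 + 1 = n+2 := by omega
    rw [h3]
    exact Nat.mul_le_mul_left _ h1

lemma ab_le (m : ℕ) :
    (ab m).1 + (ab m).2 ≤ (((m+1)/2).factorial)^2 := by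
  rcases Nat.even_or_odd m with ⟨k, hk⟩ | ⟨k, hk⟩
  · have hm : m = 2*k := by omega
    have h2 : (m+1)/2 = k := by omega
    subst hm; rw [h2]; exact (ab_le_aux k).1
  · have hm : m = 2*k+1 := by omega
    have h2 : (m+1)/2 = k+1 := by omega
    subst hm; rw [h2]
    calc (ab (2*k+1)).1 + (ab (2*k+1)).2 ≤ (k+1) * (k.factorial)^2 := (ab_le_aux k).2
      _ ≤ ((k+1).factorial)^2 := by rw [Nat.factorial_succ]; nlinarith [Nat.factorial_pos k]

lemma airy_inv (p q : ℕ → Polynomial ℝ)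
    (hp0 : p 0 = 1) (hq0 : q 0 = 0)
    (hp : ∀ m : ℕ, p (m + 1) = (p m).derivative + X * q m)
    (hq : ∀ m : ℕ, q (m + 1) = p m + (q m).derivative) :
    ∀ m : ℕ,
      (∀ i, 0 ≤ (p m).coeff i ∧ (p m).coeff i ≤ ((ab m).1 : ℝ)) ∧
      (∀ i, 0 ≤ (q m).coeff i ∧ (q m).coeff i ≤ ((ab m).2 : ℝ)) ∧
      (∀ i, m/2 < i → (p m).coeff i = 0) ∧
      (∀ i, m/2 < i → (q m).coeff i = 0) ∧
      (Even m → ∀ i, m/2 ≤ i → (q m).coeff i = 0) ∧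
      (Even m → (p m).coeff (m/2) = 1) ∧
      (¬ Even m → (q m).coeff (m/2) = 1) := by
  intro m
  induction m with
  | zero =>
    refine ⟨?_, ?_, ?_, ?_, ?_, ?_, ?_⟩ <;>
      simp [hp0, hq0, ab, Polynomial.coeff_one] <;>
      first
        | omega
        | (intro i; constructor <;> split <;> norm_num)
  | succ m ih =>
    obtain ⟨ihp, ihq, ihpv, ihqv, ihqev, ihplead, ihqlead⟩ := ih
    have cp : ∀ i, (p (m+1)).coeff i =
        (p m).coeff (i+1) * (i+1) + (X * q m).coeff i := by
      intro i; rw [hp m, Polynomial.coeff_add, Polynomial.coeff_derivative]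
    have cq : ∀ i, (q (m+1)).coeff i =
        (p m).coeff i + (q m).coeff (i+1) * (i+1) := by
      intro i; rw [hq m, Polynomial.coeff_add, Polynomial.coeff_derivative]
    have cX : ∀ i, (X * q m).coeff i = if i = 0 then 0 else (q m).coeff (i-1) := by
      intro i
      match i with
      | 0 => simp [Polynomial.mul_coeff_zero]
      | j+1 => simp [Polynomial.coeff_X_mul]
    -- helper: coeff p m (i+1) * (i+1) ≤ (m/2) * ab.1, and nonneg
    have hder_p : ∀ i : ℕ, 0 ≤ (p m).coeff (i+1) * (i+1) ∧
        (p m).coeff (i+1) * (i+1) ≤ ((m/2) * (ab m).1 : ℕ) := by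
      intro i
      constructor
      · exact mul_nonneg (ihp (i+1)).1 (by positivity)
      · by_cases h : m/2 < i+1
        · rw [ihpv _ h]; simp; positivity
        · push_cast
          have h1 : (i+1 : ℝ) ≤ (m/2 : ℕ) := by exact_mod_cast by omega
          calc (p m).coeff (i+1) * (i+1) ≤ ((ab m).1 : ℝ) * ((m/2 : ℕ) : ℝ) :=
                mul_le_mul (ihp (i+1)).2 h1 (by positivity) (by positivity)
            _ = ((m/2 : ℕ) : ℝ) * ((ab m).1 : ℝ) := by ring
    have hder_q : ∀ i : ℕ, 0 ≤ (q m).coeff (i+1) * (i+1) ∧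
        (q m).coeff (i+1) * (i+1) ≤ ((m/2) * (ab m).2 : ℕ) := by
      intro i
      constructor
      · exact mul_nonneg (ihq (i+1)).1 (by positivity)
      · by_cases h : m/2 < i+1
        · rw [ihqv _ h]; simp; positivity
        · push_cast
          have h1 : (i+1 : ℝ) ≤ (m/2 : ℕ) := by exact_mod_cast by omega
          calc (q m).coeff (i+1) * (i+1) ≤ ((ab m).2 : ℝ) * ((m/2 : ℕ) : ℝ) :=
                mul_le_mul (ihq (i+1)).2 h1 (by positivity) (by positivity)
            _ = ((m/2 : ℕ) : ℝ) * ((ab m).2 : ℝ) := by ring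
    have hXq : ∀ i : ℕ, 0 ≤ (X * q m).coeff i ∧ (X * q m).coeff i ≤ ((ab m).2 : ℝ) := by
      intro i
      rw [cX i]
      split
      · exact ⟨le_refl 0, by positivity⟩
      · exact ihq _
    refine ⟨?_, ?_, ?_, ?_, ?_, ?_, ?_⟩
    · -- bounds for p (m+1)
      intro i
      rw [cp i]
      constructor
      · exact add_nonneg (hder_p i).1 (hXq i).1
      · show _ ≤ (((m / 2) * (ab m).1 + (ab m).2 : ℕ) : ℝ)
        push_cast
        have := (hder_p i).2
        have := (hXq i).2
        push_cast at *
        linarith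
    · -- bounds for q (m+1)
      intro i
      rw [cq i]
      constructor
      · exact add_nonneg (ihp i).1 (hder_q i).1
      · show _ ≤ (((ab m).1 + (m / 2) * (ab m).2 : ℕ) : ℝ)
        push_cast
        have := (ihp i).2
        have := (hder_q i).2
        push_cast at *
        linarith
    · -- vanishing p (m+1)
      intro i hi
      rw [cp i, cX i]
      have h1 : (p m).coeff (i+1) = 0 := ihpv _ (by omega)
      rw [h1]
      rcases Nat.even_or_odd m with he | ho
      · have hm2 : (m+1)/2 = m/2 := by
          obtain ⟨k, hk⟩ := he; omega
        split
        · simp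
        · rename_i h0
          rw [ihqev he (i-1) (by omega)]; simp
      · have : ¬ Even m := Nat.not_even_iff_odd.mpr ho
        have hm2 : (m+1)/2 = m/2 + 1 := by
          obtain ⟨k, hk⟩ := ho; omega
        split
        · simp
        · rw [ihqv (i-1) (by omega)]; simp
    · -- vanishing q (m+1)
      intro i hi
      rw [cq i]
      rw [ihpv i (by omega), ihqv (i+1) (by omega)]
      simp
    · -- even vanishing q (m+1)
      intro hev i hi
      have ho : ¬ Even m := by
        intro h; obtain ⟨a,ha⟩ := h; obtain ⟨b,hb⟩ := hev; omega
      have hm2 : (m+1)/2 = m/2 + 1 := by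
        obtain ⟨k, hk⟩ := Nat.not_even_iff_odd.mp ho; omega
      rw [cq i, ihpv i (by omega), ihqv (i+1) (by omega)]
      simp
    · -- leading coeff p (m+1) when m+1 even
      intro hev
      have ho : ¬ Even m := by
        intro h; obtain ⟨a,ha⟩ := h; obtain ⟨b,hb⟩ := hev; omega
      have hm2 : (m+1)/2 = m/2 + 1 := by
        obtain ⟨k, hk⟩ := Nat.not_even_iff_odd.mp ho; omega
      rw [hm2, cp _, cX _]
      rw [ihpv (m/2+1+1) (by omega)]
      simp [ihqlead ho]
    · -- leading coeff q (m+1) when m+1 odd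
      intro hodd
      have hev : Even m := by
        by_contra h
        obtain ⟨k, hk⟩ := Nat.not_even_iff_odd.mp h
        exact hodd ⟨k+1, by omega⟩
      have hm2 : (m+1)/2 = m/2 := by obtain ⟨k,hk⟩ := hev; omega
      rw [hm2, cq _, ihqv (m/2+1) (by omega), ihplead hev]
      simp

theorem airy_polynomials_degree_and_bound
    (p q : ℕ → Polynomial ℝ)
    (hp0 : p 0 = 1) (hq0 : q 0 = 0)
    (hp : ∀ m : ℕ, p (m + 1) = (p m).derivative + X * q m)
    (hq : ∀ m : ℕ, q (m + 1) = p m + (q m).derivative) :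
    (∀ m : ℕ, 1 ≤ m → (p m + q m).natDegree = m / 2) ∧
    (∀ m : ℕ, ∀ x : ℝ, |x| < 1 →
      |(p m).eval x| + |(q m).eval x| ≤
        ((Nat.factorial ((m + 1) / 2) : ℝ)) ^ 2 / (1 - |x|)) := by
  constructor
  · intro m _
    obtain ⟨hpB, hqB, hpv, hqv, hqev, hplead, hqlead⟩ := airy_inv p q hp0 hq0 hp hq m
    apply le_antisymm
    · apply Polynomial.natDegree_le_iff_coeff_eq_zero.mpr
      intro N hN
      rw [Polynomial.coeff_add, hpv N hN, hqv N hN, add_zero]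
    · apply Polynomial.le_natDegree_of_ne_zero
      rw [Polynomial.coeff_add]
      by_cases hev : Even m
      · have h1 := hplead hev
        have h2 := (hqB (m/2)).1
        rw [h1]; intro h; linarith
      · have h1 := hqlead hev
        have h2 := (hpB (m/2)).1
        rw [h1]; intro h; linarith
  · intro m x hx
    obtain ⟨hpB, hqB, hpv, hqv, hqev, hplead, hqlead⟩ := airy_inv p q hp0 hq0 hp hq m
    have hd : (0:ℝ) < 1 - |x| := by linarith
    set n := m/2 + 1 with hn
    have hnp : (p m).natDegree < n :=
      Nat.lt_succ_of_le (Polynomial.natDegree_le_iff_coeff_eq_zero.mpr fun N hN => hpv N hN)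
    have hnq : (q m).natDegree < n :=
      Nat.lt_succ_of_le (Polynomial.natDegree_le_iff_coeff_eq_zero.mpr fun N hN => hqv N hN)
    have h1 : |(p m).eval x| ≤ ∑ i ∈ Finset.range n, ((ab m).1 : ℝ) * |x|^i := by
      rw [Polynomial.eval_eq_sum_range' hnp x]
      refine (Finset.abs_sum_le_sum_abs _ _).trans ?_
      apply Finset.sum_le_sum
      intro i _
      rw [abs_mul, abs_pow, abs_of_nonneg (hpB i).1]
      exact mul_le_mul_of_nonneg_right (hpB i).2 (by positivity)
    have h2 : |(q m).eval x| ≤ ∑ i ∈ Finset.range n, ((ab m).2 : ℝ) * |x|^i := by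
      rw [Polynomial.eval_eq_sum_range' hnq x]
      refine (Finset.abs_sum_le_sum_abs _ _).trans ?_
      apply Finset.sum_le_sum
      intro i _
      rw [abs_mul, abs_pow, abs_of_nonneg (hqB i).1]
      exact mul_le_mul_of_nonneg_right (hqB i).2 (by positivity)
    have hgeo : ∑ i ∈ Finset.range n, |x|^i ≤ 1/(1-|x|) := by
      rw [le_div_iff₀ hd]
      have hid := geom_sum_mul |x| n
      have hpow : (0:ℝ) ≤ |x|^n := by positivity
      nlinarith
    have hgeopos : (0:ℝ) ≤ ∑ i ∈ Finset.range n, |x|^i := by positivity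
    have hcast : (((ab m).1 : ℝ) + ((ab m).2 : ℝ)) ≤ ((Nat.factorial ((m + 1) / 2) : ℝ)) ^ 2 := by
      have := ab_le m
      exact_mod_cast this
    calc |(p m).eval x| + |(q m).eval x|
        ≤ (∑ i ∈ Finset.range n, ((ab m).1 : ℝ) * |x|^i)
          + ∑ i ∈ Finset.range n, ((ab m).2 : ℝ) * |x|^i := add_le_add h1 h2
      _ = (((ab m).1 : ℝ) + ((ab m).2 : ℝ)) * ∑ i ∈ Finset.range n, |x|^i := by
          rw [← Finset.sum_add_distrib, Finset.mul_sum]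
          exact Finset.sum_congr rfl fun i _ => by ring
      _ ≤ (((ab m).1 : ℝ) + ((ab m).2 : ℝ)) * (1/(1-|x|)) := by
          apply mul_le_mul_of_nonneg_left hgeo (by positivity)
      _ ≤ ((Nat.factorial ((m + 1) / 2) : ℝ)) ^ 2 * (1/(1-|x|)) := by
          apply mul_le_mul_of_nonneg_right hcast (by positivity)
      _ = ((Nat.factorial ((m + 1) / 2) : ℝ)) ^ 2 / (1 - |x|) := by ring
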